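/- At E₆ = ((ε−c)/(1−b+ε), 0, 0, (1−b+c)/(1−b+ε)), the Jacobian eigenvalues of the reduced replicator system are (b−1)(c−ε)/(b−ε−1), (b−1)(ε−c)/(b−ε−1), and (1+c−b)(c−ε)/(b−ε−1); the first two are nonzero of opposite signs whenever c≠ε, so E₆ is unstable whenever it exists with c≠ε. -/

import Mathlib

noncomputable section

/-- Reduced replicator vector field of the reputation-based voluntary Prisoner's
Dilemma: state `p = (x, y, z)` with `w = 1 - x - y - z` eliminated; payoffs
`Π_C = x+z`, `Π_D = bx`, `Π_CE = (x+z)(1-c)+(y+w)(ε-c)`,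
`Π_DE = x(b-c)-zc+(y+w)(ε-c)`; dynamics `ẋ = x(Π_C − Π̄)`, etc. -/
def repField (b c ε : ℝ) (p : Fin 3 → ℝ) : Fin 3 → ℝ :=
  let x := p 0
  let y := p 1
  let z := p 2
  let w := 1 - x - y - z
  let PC := x + z
  let PD := b * x
  let PCE := (x + z) * (1 - c) + (y + w) * (ε - c)
  let PDE := x * (b - c) - z * c + (y + w) * (ε - c)
  let Pbar := x * PC + y * PD + z * PCE + w * PDE
  ![x * (PC - Pbar), y * (PD - Pbar), z * (PCE - Pbar)]

/-- Jacobian matrix of the reduced replicator field at `p`,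
entry `(i, j)` being the partial derivative of the `i`-th component
with respect to the `j`-th variable. -/
def jac (b c ε : ℝ) (p : Fin 3 → ℝ) : Matrix (Fin 3) (Fin 3) ℝ :=
  fun i j => deriv (fun t : ℝ => repField b c ε (Function.update p j t) i) (p j)

lemma deriv_poly3 (a0 a1 a2 a3 q : ℝ) :
    deriv (fun t : ℝ => a0 + a1*t + a2*t^2 + a3*t^3) q = a1 + 2*a2*q + 3*a3*q^2 := by
  have h : HasDerivAt (fun t : ℝ => a0 + a1*t + a2*t^2 + a3*t^3)
      (a1 + 2*a2*q + 3*a3*q^2) q := by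
    have h1 := (hasDerivAt_id q).const_mul a1
    have h2 := (hasDerivAt_pow 2 q).const_mul a2
    have h3 := (hasDerivAt_pow 3 q).const_mul a3
    have := ((h1.const_add a0).add h2).add h3
    refine this.congr_deriv ?_
    push_cast
    ring
  exact h.deriv

lemma e00 (b c ε x : ℝ) : jac b c ε ![x,0,0] 0 0 =
    2*x - 3*x^2 - ε + 4*ε*x - 3*ε*x^2 + c - 2*c*x - 2*b*x + 3*b*x^2 := by
  unfold jac
  rw [show (fun t : ℝ => repField b c ε (Function.update ![x,0,0] 0 t) 0)
      = fun t : ℝ => 0 + (c - ε)*t + (1 + 2*ε - c - b)*t^2 + (b - 1 - ε)*t^3 from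
    funext fun u => by simp [repField, Function.update]; ring, deriv_poly3]
  show _ = _
  norm_num
  ring

lemma e01 (b c ε x : ℝ) : jac b c ε ![x,0,0] 0 1 = ε*x - ε*x^2 - c*x := by
  unfold jac
  rw [show (fun t : ℝ => repField b c ε (Function.update ![x,0,0] 1 t) 0)
      = fun t : ℝ => (x^2 - x^3 - ε*x + 2*ε*x^2 - ε*x^3 + c*x - c*x^2 - b*x^2 + b*x^3)
          + (ε*x - ε*x^2 - c*x)*t + 0*t^2 + 0*t^3 from
    funext fun u => by simp [repField, Function.update]; ring, deriv_poly3]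
  norm_num

lemma e02 (b c ε x : ℝ) : jac b c ε ![x,0,0] 0 2 = x - 2*x^2 + ε*x - ε*x^2 + b*x^2 := by
  unfold jac
  rw [show (fun t : ℝ => repField b c ε (Function.update ![x,0,0] 2 t) 0)
      = fun t : ℝ => (x^2 - x^3 - ε*x + 2*ε*x^2 - ε*x^3 + c*x - c*x^2 - b*x^2 + b*x^3)
          + (x - 2*x^2 + ε*x - ε*x^2 + b*x^2)*t + (-x)*t^2 + 0*t^3 from
    funext fun u => by simp [repField, Function.update]; ring, deriv_poly3]
  norm_num
  simp

lemma e10 (b c ε x : ℝ) : jac b c ε ![x,0,0] 1 0 = 0 := by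
  unfold jac
  rw [show (fun t : ℝ => repField b c ε (Function.update ![x,0,0] 0 t) 1)
      = fun _ : ℝ => (0:ℝ) from funext fun u => by simp [repField, Function.update]]
  simp

lemma e11 (b c ε x : ℝ) : jac b c ε ![x,0,0] 1 1 =
    -x^2 - ε + 2*ε*x - ε*x^2 + c - c*x + b*x^2 := by
  unfold jac
  rw [show (fun t : ℝ => repField b c ε (Function.update ![x,0,0] 1 t) 1)
      = fun t : ℝ => 0 + (-x^2 - ε + 2*ε*x - ε*x^2 + c - c*x + b*x^2)*t
          + (ε - ε*x - c)*t^2 + 0*t^3 from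
    funext fun u => by simp [repField, Function.update]; ring, deriv_poly3]
  norm_num

lemma e12 (b c ε x : ℝ) : jac b c ε ![x,0,0] 1 2 = 0 := by
  unfold jac
  rw [show (fun t : ℝ => repField b c ε (Function.update ![x,0,0] 2 t) 1)
      = fun _ : ℝ => (0:ℝ) from funext fun u => by simp [repField, Function.update]]
  simp

lemma e20 (b c ε x : ℝ) : jac b c ε ![x,0,0] 2 0 = 0 := by
  unfold jac
  rw [show (fun t : ℝ => repField b c ε (Function.update ![x,0,0] 0 t) 2)
      = fun _ : ℝ => (0:ℝ) from funext fun u => by simp [repField, Function.update]]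
  simp

lemma e21 (b c ε x : ℝ) : jac b c ε ![x,0,0] 2 1 = 0 := by
  unfold jac
  rw [show (fun t : ℝ => repField b c ε (Function.update ![x,0,0] 1 t) 2)
      = fun _ : ℝ => (0:ℝ) from funext fun u => by simp [repField, Function.update]]
  simp

lemma e22 (b c ε x : ℝ) : jac b c ε ![x,0,0] 2 2 =
    x - x^2 + ε*x - ε*x^2 - c*x - b*x + b*x^2 := by
  unfold jac
  rw [show (fun t : ℝ => repField b c ε (Function.update ![x,0,0] 2 t) 2)
      = fun t : ℝ => 0 + (x - x^2 + ε*x - ε*x^2 - c*x - b*x + b*x^2)*t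
          + (1 - 2*x - ε*x + b*x)*t^2 + (-1)*t^3 from
    funext fun u => by simp [repField, Function.update]; ring, deriv_poly3]
  norm_num
  simp

lemma jac_E6 (b c ε x : ℝ) : jac b c ε ![x,0,0] =
    !![2*x - 3*x^2 - ε + 4*ε*x - 3*ε*x^2 + c - 2*c*x - 2*b*x + 3*b*x^2,
       ε*x - ε*x^2 - c*x,
       x - 2*x^2 + ε*x - ε*x^2 + b*x^2;
       0, -x^2 - ε + 2*ε*x - ε*x^2 + c - c*x + b*x^2, 0;
       0, 0, x - x^2 + ε*x - ε*x^2 - c*x - b*x + b*x^2] := by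
  ext i j
  fin_cases i <;> fin_cases j <;>
    simp only [Matrix.cons_val', Matrix.cons_val_zero, Matrix.cons_val_one, Matrix.head_cons,
      Matrix.empty_val', Matrix.cons_val_fin_one, Matrix.cons_val_two, Matrix.tail_cons,
      Matrix.of_apply, Fin.isValue]
  · exact e00 b c ε x
  · exact e01 b c ε x
  · exact e02 b c ε x
  · exact e10 b c ε x
  · exact e11 b c ε x
  · exact e12 b c ε x
  · exact e20 b c ε x
  · exact e21 b c ε x
  · exact e22 b c ε x

open Polynomial in
lemma charpoly_tri (A B Cc D E : ℝ) :
    (!![A, B, Cc; (0:ℝ), D, 0; 0, 0, E]).charpoly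
      = (X - C A) * (X - C D) * (X - C E) := by
  rw [Matrix.charpoly, Matrix.det_fin_three]
  simp [Matrix.charmatrix_apply_eq, Matrix.charmatrix_apply_ne, Matrix.vecHead, Matrix.vecTail]

lemma eig_first (A B Cc D E : ℝ) :
    (!![A, B, Cc; (0:ℝ), D, 0; 0, 0, E]).mulVec ![1, 0, 0] = A • ![1, 0, 0] := by
  funext i
  fin_cases i <;> simp [Matrix.mulVec, dotProduct, Fin.sum_univ_three]

lemma eig_mid (A B Cc D E : ℝ) (h : D - A ≠ 0) :
    (!![A, B, Cc; (0:ℝ), D, 0; 0, 0, E]).mulVec ![B/(D-A), 1, 0]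
      = D • ![B/(D-A), 1, 0] := by
  funext i
  fin_cases i <;>
    (simp [Matrix.mulVec, dotProduct, Fin.sum_univ_three]; try (field_simp; ring))

lemma eig_last (A B Cc D E : ℝ) (h : E - A ≠ 0) :
    (!![A, B, Cc; (0:ℝ), D, 0; 0, 0, E]).mulVec ![Cc/(E-A), 0, 1]
      = E • ![Cc/(E-A), 0, 1] := by
  funext i
  fin_cases i <;>
    (simp [Matrix.mulVec, dotProduct, Fin.sum_univ_three]; try (field_simp; ring))

open Polynomial in
theorem E6_unstable (b c ε : ℝ) (hb1 : 1 < b) (hb2 : b ≤ 2)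
    (hc0 : 0 < c) (hc1 : c < 1) (he0 : 0 < ε) (he1 : ε < 1)
    (hden : b - ε - 1 ≠ 0) :
    (jac b c ε ![(ε - c) / (1 - b + ε), 0, 0]).charpoly
      = (X - C ((b - 1) * (c - ε) / (b - ε - 1)))
        * (X - C ((b - 1) * (ε - c) / (b - ε - 1)))
        * (X - C ((1 + c - b) * (c - ε) / (b - ε - 1))) ∧
    (c ≠ ε →
      ((b - 1) * (c - ε) / (b - ε - 1)) * ((b - 1) * (ε - c) / (b - ε - 1)) < 0 ∧
      ∃ lam : ℝ, 0 < lam ∧ ∃ v : Fin 3 → ℝ, v ≠ 0 ∧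
        (jac b c ε ![(ε - c) / (1 - b + ε), 0, 0]).mulVec v = lam • v) := by
  have hne : (1 : ℝ) - b + ε ≠ 0 := fun h => hden (by linarith)
  set x : ℝ := (ε - c) / (1 - b + ε) with hx
  set l1 : ℝ := (b - 1) * (c - ε) / (b - ε - 1) with hl1
  set l2 : ℝ := (b - 1) * (ε - c) / (b - ε - 1) with hl2
  set l3 : ℝ := (1 + c - b) * (c - ε) / (b - ε - 1) with hl3
  have hA : 2*x - 3*x^2 - ε + 4*ε*x - 3*ε*x^2 + c - 2*c*x - 2*b*x + 3*b*x^2 = l3 := by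
    rw [hl3, hx]; field_simp; ring
  have hD : -x^2 - ε + 2*ε*x - ε*x^2 + c - c*x + b*x^2 = l1 := by
    rw [hl1, hx]; field_simp; ring
  have hE : x - x^2 + ε*x - ε*x^2 - c*x - b*x + b*x^2 = l2 := by
    rw [hl2, hx]; field_simp; ring
  have hM : jac b c ε ![x, 0, 0]
      = !![l3, ε*x - ε*x^2 - c*x, x - 2*x^2 + ε*x - ε*x^2 + b*x^2;
           0, l1, 0; 0, 0, l2] := by
    rw [jac_E6, hA, hD, hE]
  constructor
  · rw [hM, charpoly_tri]; ring
  · intro hce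
    have hb0 : (0:ℝ) < b - 1 := by linarith
    have hcε : c - ε ≠ 0 := sub_ne_zero.mpr hce
    have hq : (b - 1) * (c - ε) / (b - ε - 1) ≠ 0 :=
      div_ne_zero (mul_ne_zero (ne_of_gt hb0) hcε) hden
    have hsq : 0 < ((b - 1) * (c - ε) / (b - ε - 1)) * ((b - 1) * (c - ε) / (b - ε - 1)) :=
      mul_self_pos.mpr hq
    have hprod : l1 * l2 < 0 := by
      have h12 : l1 * l2
          = -(((b - 1) * (c - ε) / (b - ε - 1)) * ((b - 1) * (c - ε) / (b - ε - 1))) := by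
        rw [hl1, hl2]; field_simp; ring
      rw [h12]; linarith
    refine ⟨hprod, ?_⟩
    by_cases hpos : 0 < l1
    · refine ⟨l1, hpos, ?_⟩
      by_cases hdd : l1 - l3 = 0
      · refine ⟨![1, 0, 0], ?_, ?_⟩
        · intro h; have := congrFun h 0; simp at this
        · rw [hM]
          have h1 := eig_first l3 (ε*x - ε*x^2 - c*x) (x - 2*x^2 + ε*x - ε*x^2 + b*x^2) l1 l2
          rw [h1, show l3 = l1 by linarith [sub_eq_zero.mp hdd]]
      · refine ⟨![(ε*x - ε*x^2 - c*x)/(l1 - l3), 1, 0], ?_, ?_⟩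
        · intro h; have := congrFun h 1; simp at this
        · rw [hM]
          exact eig_mid l3 (ε*x - ε*x^2 - c*x) (x - 2*x^2 + ε*x - ε*x^2 + b*x^2) l1 l2 hdd
    · have hl2pos : 0 < l2 := by
        rcases mul_neg_iff.mp hprod with ⟨h1, h2⟩ | ⟨h1, h2⟩
        · exact absurd h1 hpos
        · exact h2
      refine ⟨l2, hl2pos, ?_⟩
      have hdd : l2 - l3 ≠ 0 := by
        have : l2 - l3 = c * (ε - c) / (b - ε - 1) := by
          rw [hl2, hl3]; field_simp; ring
        rw [this]
        exact div_ne_zero (mul_ne_zero (ne_of_gt hc0) (fun h => hcε (by linarith [sub_eq_zero.mp h]))) hden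
      refine ⟨![(x - 2*x^2 + ε*x - ε*x^2 + b*x^2)/(l2 - l3), 0, 1], ?_, ?_⟩
      · intro h; have := congrFun h 2; simp at this
      · rw [hM]
        exact eig_last l3 (ε*x - ε*x^2 - c*x) (x - 2*x^2 + ε*x - ε*x^2 + b*x^2) l1 l2 hdd
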